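/- Let U, V, A, B be random variables with values in [−1, 1] satisfying U = (V + A·T)/(1 + B·T) where T = tanh(βJ), β > 0 is a constant, and J is a random variable with density (α/(2N))·1_{|x| ≥ N^(−1/α)}/|x|^(α+1) for parameters 1 < α < 2 and N ≥ 1. Then |U − V| ≤ 2|T|/(1 − |T|) pointwise, and E|U − V|² → 0 as N → ∞. -/

import Mathlib

open MeasureTheory Filter Topology

/-- Law of the Lévy disorder `J`: density `(α/(2N)) 1_{|x| ≥ N^{-1/α}} / |x|^{α+1}`
with respect to Lebesgue measure. -/
noncomputable def levyLaw (α : ℝ) (N : ℕ) : Measure ℝ :=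
  volume.withDensity fun x =>
    ENNReal.ofReal (if (N : ℝ) ^ (-(1 : ℝ) / α) ≤ |x|
      then α / (2 * N) / |x| ^ (α + 1) else 0)

lemma my_abs_tanh_lt_one (x : ℝ) : |Real.tanh x| < 1 := by
  rw [← sq_lt_one_iff_abs_lt_one]
  have hc := Real.cosh_pos x
  rw [Real.tanh_eq_sinh_div_cosh, div_pow, div_lt_one (by positivity)]
  nlinarith [Real.cosh_sq x]

lemma my_tanh_le_two_mul {x : ℝ} (hx : 0 ≤ x) : Real.tanh x ≤ 2 * x := by
  have ha : 0 < Real.exp x := Real.exp_pos x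
  have hb : 0 < Real.exp (-x) := Real.exp_pos _
  have hab : Real.exp x * Real.exp (-x) = 1 := by
    rw [← Real.exp_add]; simp
  have h1 : 1 - 2 * x ≤ Real.exp (-x) * Real.exp (-x) := by
    rw [← Real.exp_add]
    have := Real.add_one_le_exp (-x + -x); linarith
  have h2 : Real.exp (-x) ≤ 1 := by
    rw [← Real.exp_zero]; exact Real.exp_le_exp.mpr (by linarith)
  rw [Real.tanh_eq_sinh_div_cosh, div_le_iff₀ (Real.cosh_pos x), Real.sinh_eq, Real.cosh_eq]
  nlinarith [mul_nonneg (by nlinarith : (0:ℝ) ≤ 2 * x - (1 - Real.exp (-x) * Real.exp (-x)))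
      (by positivity : (0:ℝ) ≤ Real.exp x + Real.exp (-x)),
    mul_nonneg (mul_nonneg hb.le (by linarith : (0:ℝ) ≤ 1 - Real.exp (-x)))
      (by linarith : (0:ℝ) ≤ 1 + Real.exp (-x))]

lemma my_tanh_nonneg {x : ℝ} (hx : 0 ≤ x) : 0 ≤ Real.tanh x := by
  rw [Real.tanh_eq_sinh_div_cosh]
  exact div_nonneg (by rwa [Real.sinh_nonneg_iff]) (Real.cosh_pos x).le

lemma my_abs_tanh_le (x : ℝ) : |Real.tanh x| ≤ 2 * |x| := by
  rcases le_total 0 x with hx | hx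
  · rw [abs_of_nonneg hx, abs_of_nonneg (my_tanh_nonneg hx)]
    exact my_tanh_le_two_mul hx
  · have hx' : 0 ≤ -x := by linarith
    rw [abs_of_nonpos hx, abs_of_nonpos ?_]
    · have := my_tanh_le_two_mul hx'
      rw [Real.tanh_neg] at this; linarith
    · have := my_tanh_nonneg hx'
      rw [Real.tanh_neg] at this; linarith


lemma levy_tail_bound {α β : ℝ} (hα : 1 < α) (hβ : 0 < β) {N : ℕ} (hN : 1 ≤ N) :
    ∫⁻ x, ENNReal.ofReal (16 * β * |x|) ∂(levyLaw α N)
      ≤ ENNReal.ofReal (16 * α * β / (α - 1) * (N : ℝ) ^ (-(1 : ℝ) / α)) := by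
  have hNpos : (0 : ℝ) < N := by exact_mod_cast hN
  have hαpos : (0 : ℝ) < α := by linarith
  have hα1 : (0 : ℝ) < α - 1 := by linarith
  set ε : ℝ := (N : ℝ) ^ (-(1 : ℝ) / α) with hεdef
  have hε : 0 < ε := Real.rpow_pos_of_pos hNpos _
  have hdmeas : Measurable (fun x : ℝ =>
      ENNReal.ofReal (if ε ≤ |x| then α / (2 * N) / |x| ^ (α + 1) else 0)) := by
    apply Measurable.ennreal_ofReal
    exact Measurable.ite (measurableSet_le measurable_const measurable_abs)
      (measurable_const.div (measurable_abs.pow measurable_const)) measurable_const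
  have hgmeas : Measurable (fun x : ℝ => ENNReal.ofReal (16 * β * |x|)) :=
    (measurable_abs.const_mul _).ennreal_ofReal
  rw [levyLaw, lintegral_withDensity_eq_lintegral_mul _ hdmeas hgmeas]
  have hpt : ∀ x : ℝ,
      ((fun x : ℝ => ENNReal.ofReal (if ε ≤ |x| then α / (2 * N) / |x| ^ (α + 1) else 0)) *
        (fun x : ℝ => ENNReal.ofReal (16 * β * |x|))) x
      = ENNReal.ofReal (8 * α * β / N) *
          ENNReal.ofReal (if ε ≤ |x| then |x| ^ (-α) else 0) := by
    intro x
    simp only [Pi.mul_apply]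
    by_cases hx : ε ≤ |x|
    · rw [if_pos hx, if_pos hx, ← ENNReal.ofReal_mul
        (div_nonneg (div_nonneg hαpos.le (by positivity))
          (Real.rpow_nonneg (abs_nonneg x) _)),
        ← ENNReal.ofReal_mul (by apply div_nonneg _ hNpos.le; nlinarith)]
      congr 1
      have hx0 : 0 < |x| := lt_of_lt_of_le hε hx
      have h1 : (0 : ℝ) < |x| ^ α := Real.rpow_pos_of_pos hx0 _
      rw [Real.rpow_neg hx0.le, Real.rpow_add_one (ne_of_gt hx0)]
      field_simp
      ring
    · rw [if_neg hx, if_neg hx]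
      simp
  rw [lintegral_congr hpt, lintegral_const_mul' _ _ ENNReal.ofReal_ne_top]
  set χ : ℝ → ENNReal :=
    fun x => Set.indicator (Set.Ici ε) (fun y => ENNReal.ofReal (y ^ (-α))) x with hχdef
  have hχmeas : Measurable χ :=
    ((measurable_id.pow measurable_const).ennreal_ofReal).indicator measurableSet_Ici
  have hpt2 : ∀ x : ℝ, ENNReal.ofReal (if ε ≤ |x| then |x| ^ (-α) else 0) ≤ χ x + χ (-x) := by
    intro x
    by_cases hx : ε ≤ |x|
    · rw [if_pos hx]
      rcases abs_choice x with h | h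
      · have hx' : ε ≤ x := by rwa [h] at hx
        have hc : χ x = ENNReal.ofReal (x ^ (-α)) := Set.indicator_of_mem hx' _
        rw [h, ← hc]
        exact le_self_add
      · have hx' : ε ≤ -x := by rwa [h] at hx
        have hc : χ (-x) = ENNReal.ofReal ((-x) ^ (-α)) := Set.indicator_of_mem hx' _
        rw [h, ← hc]
        exact le_add_self
    · rw [if_neg hx]; simp
  have hneg : ∫⁻ x, χ (-x) = ∫⁻ x, χ x := by
    conv_rhs => rw [← Measure.map_neg_eq_self (volume : Measure ℝ)]
    rw [lintegral_map hχmeas measurable_neg]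
  have hIoi : IntegrableOn (fun x : ℝ => x ^ (-α)) (Set.Ioi ε) :=
    integrableOn_Ioi_rpow_of_lt (by linarith) hε
  have hIci : IntegrableOn (fun x : ℝ => x ^ (-α)) (Set.Ici ε) := by
    rwa [IntegrableOn, Measure.restrict_congr_set Ioi_ae_eq_Ici] at hIoi
  have hval : ∫ x in Set.Ici ε, x ^ (-α) = ε ^ (1 - α) / (α - 1) := by
    rw [MeasureTheory.integral_Ici_eq_integral_Ioi, integral_Ioi_rpow_of_lt (by linarith) hε,
      show -α + 1 = 1 - α by ring]
    have h1 : (1 : ℝ) - α ≠ 0 := by linarith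
    field_simp
    ring
  have hchi : ∫⁻ x, χ x = ENNReal.ofReal (ε ^ (1 - α) / (α - 1)) := by
    simp only [hχdef]
    rw [lintegral_indicator measurableSet_Ici,
      ← ofReal_integral_eq_lintegral_ofReal hIci
        (ae_restrict_of_forall_mem measurableSet_Ici fun x hx =>
          Real.rpow_nonneg (le_trans hε.le hx) _),
      hval]
  have hE0 : (0 : ℝ) ≤ ε ^ (1 - α) / (α - 1) :=
    div_nonneg (Real.rpow_nonneg hε.le _) hα1.le
  have hψ : ∫⁻ x, ENNReal.ofReal (if ε ≤ |x| then |x| ^ (-α) else 0)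
      ≤ ENNReal.ofReal (2 * (ε ^ (1 - α) / (α - 1))) := by
    calc ∫⁻ x, ENNReal.ofReal (if ε ≤ |x| then |x| ^ (-α) else 0)
        ≤ ∫⁻ x, (χ x + χ (-x)) := lintegral_mono hpt2
      _ = (∫⁻ x, χ x) + ∫⁻ x, χ (-x) := lintegral_add_left hχmeas _
      _ = ENNReal.ofReal (2 * (ε ^ (1 - α) / (α - 1))) := by
          simp only [hneg, hchi]
          rw [two_mul, ENNReal.ofReal_add hE0 hE0]
  have hc0 : (0 : ℝ) ≤ 8 * α * β / N := by
    apply div_nonneg _ hNpos.le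
    nlinarith
  calc ENNReal.ofReal (8 * α * β / N)
        * ∫⁻ x, ENNReal.ofReal (if ε ≤ |x| then |x| ^ (-α) else 0)
      ≤ ENNReal.ofReal (8 * α * β / N) * ENNReal.ofReal (2 * (ε ^ (1 - α) / (α - 1))) :=
        mul_le_mul_right hψ _
    _ ≤ ENNReal.ofReal (16 * α * β / (α - 1) * ε) := by
        rw [← ENNReal.ofReal_mul hc0]
        apply ENNReal.ofReal_le_ofReal
        have hαne : α ≠ 0 := by linarith
        have hkey : ε ^ (1 - α) = (N : ℝ) * ε := by
          rw [hεdef, ← Real.rpow_mul hNpos.le,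
            show (-(1 : ℝ) / α) * (1 - α) = 1 + (-(1 : ℝ) / α) by field_simp; ring,
            Real.rpow_add hNpos, Real.rpow_one]
        rw [hkey]
        have hNne : (N : ℝ) ≠ 0 := hNpos.ne'
        have h1 : (α : ℝ) - 1 ≠ 0 := hα1.ne'
        apply le_of_eq
        field_simp
        ring

theorem cavity_L2_vanishing {Ω : Type*} [MeasurableSpace Ω] (μ : Measure Ω)
    [IsProbabilityMeasure μ] (α β : ℝ) (hα : 1 < α) (hα2 : α < 2) (hβ : 0 < β)
    (U V A B J : ℕ → Ω → ℝ)
    (hUm : ∀ N, Measurable (U N)) (hVm : ∀ N, Measurable (V N))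
    (hAm : ∀ N, Measurable (A N)) (hBm : ∀ N, Measurable (B N))
    (hJm : ∀ N, Measurable (J N))
    (hUb : ∀ N ω, |U N ω| ≤ 1) (hVb : ∀ N ω, |V N ω| ≤ 1)
    (hAb : ∀ N ω, |A N ω| ≤ 1) (hBb : ∀ N ω, |B N ω| ≤ 1)
    (hlaw : ∀ N : ℕ, 1 ≤ N → μ.map (J N) = levyLaw α N)
    (heq : ∀ N ω, U N ω
      = (V N ω + A N ω * Real.tanh (β * J N ω)) / (1 + B N ω * Real.tanh (β * J N ω))) :
    (∀ N ω, |U N ω - V N ω|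
        ≤ 2 * |Real.tanh (β * J N ω)| / (1 - |Real.tanh (β * J N ω)|)) ∧
    Tendsto (fun N : ℕ => ∫ ω, (U N ω - V N ω) ^ 2 ∂μ) atTop (𝓝 0) := by
  have part1 : ∀ N ω, |U N ω - V N ω|
      ≤ 2 * |Real.tanh (β * J N ω)| / (1 - |Real.tanh (β * J N ω)|) := by
    intro N ω
    set T := Real.tanh (β * J N ω) with hTdef
    have hT1 : |T| < 1 := my_abs_tanh_lt_one _
    have hBT : |B N ω * T| ≤ |T| := by
      rw [abs_mul]
      calc |B N ω| * |T| ≤ 1 * |T| :=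
            mul_le_mul_of_nonneg_right (hBb N ω) (abs_nonneg T)
        _ = |T| := one_mul _
    have hden : 0 < 1 + B N ω * T := by
      have := (abs_lt.mp (lt_of_le_of_lt hBT hT1)).1; linarith
    have hUV : U N ω - V N ω = (A N ω - V N ω * B N ω) * T / (1 + B N ω * T) := by
      rw [heq N ω, ← hTdef]
      have := hden.ne'
      rw [eq_div_iff this, sub_mul, div_mul_cancel₀ _ this]
      ring
    rw [hUV, abs_div]
    have hnum : |(A N ω - V N ω * B N ω) * T| ≤ 2 * |T| := by
      rw [abs_mul]
      have h2 : |A N ω - V N ω * B N ω| ≤ 2 := by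
        have h3 : |V N ω * B N ω| ≤ 1 := by
          rw [abs_mul]
          calc |V N ω| * |B N ω| ≤ 1 * 1 :=
                mul_le_mul (hVb N ω) (hBb N ω) (abs_nonneg _) zero_le_one
            _ = 1 := one_mul 1
        calc |A N ω - V N ω * B N ω| ≤ |A N ω| + |V N ω * B N ω| := abs_sub _ _
          _ ≤ 1 + 1 := add_le_add (hAb N ω) h3
          _ = 2 := by norm_num
      exact mul_le_mul_of_nonneg_right h2 (abs_nonneg T)
    have hdl : 1 - |T| ≤ |1 + B N ω * T| := by
      have h1 : -|T| ≤ B N ω * T := le_trans (neg_le_neg hBT) (neg_abs_le _)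
      calc 1 - |T| ≤ 1 + B N ω * T := by linarith
        _ ≤ |1 + B N ω * T| := le_abs_self _
    exact div_le_div₀ (by positivity) hnum (by linarith) hdl
  refine ⟨part1, ?_⟩
  -- pointwise square bound
  have ptsq : ∀ N ω, (U N ω - V N ω) ^ 2 ≤ 16 * β * |J N ω| := by
    intro N ω
    set T := Real.tanh (β * J N ω) with hTdef
    have hT1 : |T| < 1 := my_abs_tanh_lt_one _
    have htJ : |β * J N ω| = β * |J N ω| := by rw [abs_mul, abs_of_pos hβ]
    have h2 : |T| ≤ 2 * |β * J N ω| := my_abs_tanh_le _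
    have h4 : |U N ω - V N ω| ≤ 2 := by
      calc |U N ω - V N ω| ≤ |U N ω| + |V N ω| := abs_sub _ _
        _ ≤ 1 + 1 := add_le_add (hUb N ω) (hVb N ω)
        _ = 2 := by norm_num
    rcases le_or_gt (|β * J N ω|) (1/4) with hc | hc
    · have hTle : |T| ≤ 1/2 := by linarith
      have hp := part1 N ω
      have hb : 2 * |T| / (1 - |T|) ≤ 4 * |T| := by
        rw [div_le_iff₀ (by linarith)]
        nlinarith [abs_nonneg T]
      have h8 : |U N ω - V N ω| ≤ 8 * |β * J N ω| := by
        calc |U N ω - V N ω| ≤ 2 * |T| / (1 - |T|) := hp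
          _ ≤ 4 * |T| := hb
          _ ≤ 8 * |β * J N ω| := by linarith
      calc (U N ω - V N ω) ^ 2 = |U N ω - V N ω| ^ 2 := (sq_abs _).symm
        _ ≤ 16 * |β * J N ω| := by nlinarith [abs_nonneg (U N ω - V N ω), abs_nonneg (β * J N ω)]
        _ = 16 * β * |J N ω| := by rw [htJ]; ring
    · calc (U N ω - V N ω) ^ 2 = |U N ω - V N ω| ^ 2 := (sq_abs _).symm
        _ ≤ 4 := by nlinarith [abs_nonneg (U N ω - V N ω)]
        _ ≤ 16 * β * |J N ω| := by
            have h16 : 16 * β * |J N ω| = 16 * |β * J N ω| := by rw [htJ]; ring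
            rw [h16]; linarith
  have key : ∀ N : ℕ, 1 ≤ N → ∫ ω, (U N ω - V N ω) ^ 2 ∂μ
      ≤ 16 * α * β / (α - 1) * (N : ℝ) ^ (-(1 : ℝ) / α) := by
    intro N hN
    have hsm : AEStronglyMeasurable (fun ω => (U N ω - V N ω) ^ 2) μ :=
      (((hUm N).sub (hVm N)).pow_const 2).aestronglyMeasurable
    rw [integral_eq_lintegral_of_nonneg_ae (ae_of_all _ fun ω => sq_nonneg _) hsm]
    have hb : (0 : ℝ) ≤ 16 * α * β / (α - 1) * (N : ℝ) ^ (-(1 : ℝ) / α) := by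
      apply mul_nonneg _ (Real.rpow_nonneg (Nat.cast_nonneg N) _)
      apply div_nonneg _ (by linarith)
      nlinarith
    apply ENNReal.toReal_le_of_le_ofReal hb
    calc ∫⁻ ω, ENNReal.ofReal ((U N ω - V N ω) ^ 2) ∂μ
        ≤ ∫⁻ ω, ENNReal.ofReal (16 * β * |J N ω|) ∂μ :=
          lintegral_mono fun ω => ENNReal.ofReal_le_ofReal (ptsq N ω)
      _ = ∫⁻ x, ENNReal.ofReal (16 * β * |x|) ∂(levyLaw α N) := by
          rw [← hlaw N hN, lintegral_map ((measurable_abs.const_mul _).ennreal_ofReal) (hJm N)]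
      _ ≤ _ := levy_tail_bound hα hβ hN
  have hnonneg : ∀ N : ℕ, 0 ≤ ∫ ω, (U N ω - V N ω) ^ 2 ∂μ :=
    fun N => integral_nonneg fun ω => sq_nonneg _
  have hlim : Tendsto (fun N : ℕ => 16 * α * β / (α - 1) * (N : ℝ) ^ (-(1 : ℝ) / α))
      atTop (𝓝 0) := by
    rw [show (0 : ℝ) = 16 * α * β / (α - 1) * 0 by ring]
    apply Tendsto.const_mul
    have h1 : Tendsto (fun x : ℝ => x ^ (-(1 / α))) atTop (𝓝 0) :=
      tendsto_rpow_neg_atTop (one_div_pos.mpr (by linarith))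
    have h2 := h1.comp (tendsto_natCast_atTop_atTop : Tendsto (Nat.cast : ℕ → ℝ) atTop atTop)
    simpa [Function.comp_def, neg_div] using h2
  exact tendsto_of_tendsto_of_tendsto_of_le_of_le' tendsto_const_nhds hlim
    (Eventually.of_forall hnonneg) (eventually_atTop.mpr ⟨1, key⟩)
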